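/- Let n ≥ 2 and let a, b ≥ 1 be integers with c := n − a − b ≥ 0. Define P(a,b;n) = [ (1/(a·b)) · binom(2a−2, a−1) · binom(2b−2, b−1) · binom(2c, c) ] / [ ((n−1)/n) · binom(2n−2, n−1) ]. Then P(a,b;n) ≤ (1/(2π)) · sqrt(n) / ( a · sqrt(a − 3/4) · b · sqrt(b − 3/4) · sqrt(c + 1/4) ). -/

import Mathlib

open Filter Real Stirling Nat Topology

noncomputable def wcb (k : ℕ) : ℝ := (Nat.centralBinom k : ℝ) / 4 ^ k

lemma wcb_pos (k : ℕ) : 0 < wcb k := by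
  unfold wcb
  have := Nat.centralBinom_pos k
  positivity

lemma wcb_succ (k : ℕ) : wcb (k + 1) * (2 * k + 2) = wcb k * (2 * k + 1) := by
  have h := Nat.succ_mul_centralBinom_succ k
  have h' : ((k:ℝ) + 1) * (Nat.centralBinom (k+1) : ℝ) = 2 * (2 * k + 1) * Nat.centralBinom k := by
    exact_mod_cast congrArg (Nat.cast (R := ℝ)) h
  unfold wcb
  have h4 : (4:ℝ) ^ (k+1) = 4 * 4 ^ k := by ring
  have h40 : (0:ℝ) < 4 ^ k := by positivity
  field_simp [h4]
  linear_combination (2 * (4:ℝ) ^ k) * h'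

lemma fact_stirling (m : ℕ) (hm : 1 ≤ m) :
    (m ! : ℝ) = stirlingSeq m * (Real.sqrt (2 * m) * ((m:ℝ) / Real.exp 1) ^ m) := by
  have hm0 : (0:ℝ) < m := by exact_mod_cast hm
  rw [stirlingSeq, div_mul_cancel₀]
  positivity

lemma cb_stirling {k : ℕ} (hk : 1 ≤ k) :
    (Nat.centralBinom k : ℝ) * Real.sqrt k = stirlingSeq (2 * k) / stirlingSeq k ^ 2 * 4 ^ k := by
  have hk0 : (0:ℝ) < k := by exact_mod_cast hk
  have hsk : 0 < stirlingSeq k := by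
    obtain ⟨m, rfl⟩ := Nat.exists_eq_add_of_le hk
    simpa [Nat.add_comm] using stirlingSeq'_pos m
  have hs2k : 0 < stirlingSeq (2 * k) := by
    obtain ⟨m, rfl⟩ := Nat.exists_eq_add_of_le hk
    have h2 : 2 * (1 + m) = (2 * m + 1) + 1 := by ring
    rw [h2]; exact stirlingSeq'_pos _
  set u := Real.sqrt k with hu
  have hu0 : 0 < u := Real.sqrt_pos.mpr hk0
  have hu2 : u ^ 2 = k := Real.sq_sqrt hk0.le
  set P := ((k : ℝ) / Real.exp 1) ^ k with hP
  have hP0 : 0 < P := by positivity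
  have hsq2 : Real.sqrt (2 * (k:ℝ)) = Real.sqrt 2 * u := Real.sqrt_mul (by norm_num) _
  have h20 : (0:ℝ) < Real.sqrt 2 := by positivity
  have hs2 : Real.sqrt 2 ^ 2 = 2 := Real.sq_sqrt (by norm_num)
  have e1 : (k ! : ℝ) = stirlingSeq k * (Real.sqrt 2 * u * P) := by
    rw [fact_stirling k hk, hsq2]
  have e2 : ((2 * k)! : ℝ) = stirlingSeq (2 * k) * (2 * u * (4 ^ k * P ^ 2)) := by
    rw [fact_stirling (2 * k) (by omega)]
    have c1 : ((2 * k : ℕ) : ℝ) = 2 * (k : ℝ) := by push_cast; ring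
    rw [c1]
    have c2 : Real.sqrt (2 * (2 * (k:ℝ))) = 2 * u := by
      rw [show 2 * (2 * (k:ℝ)) = 4 * k by ring, Real.sqrt_mul (by norm_num) _,
        show (4:ℝ) = 2^2 by norm_num, Real.sqrt_sq (by norm_num)]
    have c3 : (2 * (k:ℝ) / Real.exp 1) ^ (2 * k) = 4 ^ k * P ^ 2 := by
      have d1 : (2 * (k:ℝ) / Real.exp 1) ^ (2*k) = ((2 * (k:ℝ) / Real.exp 1) ^ 2) ^ k := by
        rw [pow_mul]
      have d2 : ((2 * (k:ℝ) / Real.exp 1) ^ 2) = 4 * ((k:ℝ) / Real.exp 1) ^ 2 := by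
        ring
      have d3 : P ^ 2 = (((k:ℝ) / Real.exp 1) ^ 2) ^ k := by
        rw [hP]; ring
      rw [d1, d2, mul_pow, d3]
    rw [c2, c3]
  have e3 : (Nat.centralBinom k : ℝ) * k ! * k ! = ((2 * k)! : ℝ) := by
    have h := Nat.choose_mul_factorial_mul_factorial (show k ≤ 2*k by omega)
    rw [show 2*k - k = k by omega] at h
    rw [Nat.centralBinom_eq_two_mul_choose]
    exact_mod_cast congrArg (Nat.cast (R := ℝ)) h
  have key : (Nat.centralBinom k : ℝ) * (stirlingSeq k * (Real.sqrt 2*u*P)) *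
      (stirlingSeq k * (Real.sqrt 2*u*P)) = stirlingSeq (2*k) * (2*u*(4^k*P^2)) := by
    rw [← e1, ← e2]; exact e3
  rw [div_mul_eq_mul_div, eq_div_iff (by positivity)]
  apply mul_right_cancel₀ (show (2*u*P^2 : ℝ) ≠ 0 by positivity)
  linear_combination key - ((Nat.centralBinom k : ℝ) * stirlingSeq k ^2 * u^2 * P^2) * hs2

lemma tendsto_wcb_sq_mul : Tendsto (fun k : ℕ => wcb k ^ 2 * k) atTop (𝓝 (1 / π)) := by
  have h2k : Tendsto (fun k : ℕ => 2 * k) atTop atTop :=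
    Filter.tendsto_atTop_atTop.mpr fun b => ⟨b, fun a ha => by omega⟩
  have hπ : (0:ℝ) < π := pi_pos
  have hsπ : Real.sqrt π ^ 2 = π := Real.sq_sqrt hπ.le
  have hs : Tendsto (fun k : ℕ => stirlingSeq (2 * k) / stirlingSeq k ^ 2) atTop
      (𝓝 (Real.sqrt π / Real.sqrt π ^ 2)) :=
    (tendsto_stirlingSeq_sqrt_pi.comp h2k).div (tendsto_stirlingSeq_sqrt_pi.pow 2)
      (by rw [hsπ]; exact hπ.ne')
  have hval : (Real.sqrt π / Real.sqrt π ^ 2) ^ 2 = 1 / π := by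
    rw [hsπ, div_pow, hsπ, pow_two]
    field_simp
  have hs2 : Tendsto (fun k : ℕ => (stirlingSeq (2 * k) / stirlingSeq k ^ 2) ^ 2) atTop
      (𝓝 (1 / π)) := by
    rw [← hval]; exact hs.pow 2
  refine hs2.congr' ?_
  filter_upwards [Filter.eventually_ge_atTop 1] with k hk
  have h := cb_stirling hk
  have h4 : (0:ℝ) < 4 ^ k := by positivity
  have hk0 : (0:ℝ) ≤ k := Nat.cast_nonneg k
  have hS : stirlingSeq (2 * k) / stirlingSeq k ^ 2
      = (Nat.centralBinom k : ℝ) * Real.sqrt k / 4 ^ k := by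
    rw [h, mul_div_assoc, div_self h4.ne', mul_one]
  rw [hS]
  unfold wcb
  rw [div_pow, div_pow, mul_pow, Real.sq_sqrt hk0]
  ring

lemma wcb_sq_tendsto_zero : Tendsto (fun k : ℕ => wcb k ^ 2) atTop (𝓝 0) := by
  have h := tendsto_wcb_sq_mul.mul tendsto_one_div_atTop_nhds_zero_nat
  rw [mul_zero] at h
  refine h.congr' ?_
  filter_upwards [Filter.eventually_ge_atTop 1] with k hk
  have hk0 : ((k:ℝ)) ≠ 0 := by positivity
  field_simp

lemma tendsto_wcb_shift (x : ℝ) :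
    Tendsto (fun k : ℕ => wcb k ^ 2 * (k + x)) atTop (𝓝 (1 / π)) := by
  have h := tendsto_wcb_sq_mul.add (wcb_sq_tendsto_zero.mul_const x)
  rw [zero_mul, add_zero] at h
  refine h.congr fun k => by ring

lemma wcb_upper (k : ℕ) : wcb k ^ 2 * (k + 1/4) ≤ 1 / π := by
  have hmono : Monotone fun k : ℕ => wcb k ^ 2 * (k + 1/4) := by
    apply monotone_nat_of_le_succ
    intro k
    have h := wcb_succ k
    have h2 : (wcb (k+1) * (2*k+2))^2 = (wcb k * (2*k+1))^2 := by rw [h]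
    have hk0 : (0:ℝ) ≤ k := Nat.cast_nonneg k
    push_cast
    nlinarith [h2, sq_nonneg (wcb (k+1)), mul_nonneg (sq_nonneg (wcb (k+1))) hk0]
  exact hmono.ge_of_tendsto (tendsto_wcb_shift (1/4)) k

lemma wcb_lower (k : ℕ) : 1 / π ≤ wcb k ^ 2 * (k + 1/3) := by
  have hanti : Antitone fun k : ℕ => wcb k ^ 2 * (k + 1/3) := by
    apply antitone_nat_of_succ_le
    intro k
    have h := wcb_succ k
    have h2 : (wcb (k+1) * (2*k+2))^2 = (wcb k * (2*k+1))^2 := by rw [h]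
    have hk0 : (0:ℝ) ≤ k := Nat.cast_nonneg k
    push_cast
    have hb : (0:ℝ) < (2*(k:ℝ)+1)^2 := by positivity
    rw [← mul_le_mul_iff_of_pos_right hb]
    nlinarith [h2, sq_nonneg (wcb (k+1)), mul_nonneg (sq_nonneg (wcb (k+1))) hk0,
      mul_nonneg (mul_nonneg (sq_nonneg (wcb (k+1))) hk0) hk0]
  exact hanti.le_of_tendsto (tendsto_wcb_shift (1/3)) k

lemma cb_upper (k : ℕ) : (Nat.centralBinom k : ℝ) * Real.sqrt (π * (k + 1/4)) ≤ 4 ^ k := by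
  have h := wcb_upper k
  have hx : (0:ℝ) ≤ π * (k + 1/4) := by positivity
  set t := wcb k * Real.sqrt (π * (k + 1/4)) with ht
  have ht0 : 0 ≤ t := mul_nonneg (wcb_pos k).le (Real.sqrt_nonneg _)
  have ht2 : t ^ 2 ≤ 1 := by
    rw [ht, mul_pow, Real.sq_sqrt hx]
    calc wcb k ^ 2 * (π * (k + 1/4)) = wcb k ^ 2 * (k + 1/4) * π := by ring
      _ ≤ 1/π * π := mul_le_mul_of_nonneg_right h pi_pos.le
      _ = 1 := by field_simp
  have ht1 : t ≤ 1 := by nlinarith [sq_nonneg (t - 1)]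
  have h4 : (0:ℝ) < 4 ^ k := by positivity
  have heq : (Nat.centralBinom k : ℝ) * Real.sqrt (π * (k + 1/4)) = t * 4 ^ k := by
    rw [ht]; unfold wcb; field_simp
  rw [heq]
  calc t * 4 ^ k ≤ 1 * 4 ^ k := mul_le_mul_of_nonneg_right ht1 h4.le
    _ = 4 ^ k := one_mul _

lemma cb_lower (k : ℕ) : (4:ℝ) ^ k ≤ (Nat.centralBinom k : ℝ) * Real.sqrt (π * (k + 1/3)) := by
  have h := wcb_lower k
  have hx : (0:ℝ) ≤ π * (k + 1/3) := by positivity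
  set t := wcb k * Real.sqrt (π * (k + 1/3)) with ht
  have ht0 : 0 ≤ t := mul_nonneg (wcb_pos k).le (Real.sqrt_nonneg _)
  have ht2 : 1 ≤ t ^ 2 := by
    rw [ht, mul_pow, Real.sq_sqrt hx]
    calc (1:ℝ) = 1/π * π := by field_simp
      _ ≤ wcb k ^ 2 * (k + 1/3) * π := mul_le_mul_of_nonneg_right h pi_pos.le
      _ = wcb k ^ 2 * (π * (k + 1/3)) := by ring
  have ht1 : 1 ≤ t := by nlinarith [sq_nonneg (t - 1), sq_nonneg (t + 1)]
  have h4 : (0:ℝ) < 4 ^ k := by positivity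
  have heq : (Nat.centralBinom k : ℝ) * Real.sqrt (π * (k + 1/3)) = t * 4 ^ k := by
    rw [ht]; unfold wcb; field_simp
  rw [heq]
  calc (4:ℝ) ^ k = 1 * 4 ^ k := (one_mul _).symm
    _ ≤ t * 4 ^ k := mul_le_mul_of_nonneg_right ht1 h4.le
set_option maxHeartbeats 1000000

/-- Bound on the probability `P(a,b;n)` that a uniformly random rooted binary planar
tree with `n` unlabeled leaves and a uniformly random marked internal vertex has `a`
left-descendant leaves and `b` right-descendant leaves (with `c = n − a − b`):
`P(a,b;n) ≤ (1/(2π)) √n / (a √(a − 3/4) · b √(b − 3/4) · √(c + 1/4))`. -/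
theorem stmt13 (n a b c : ℕ) (hn : 2 ≤ n) (ha : 1 ≤ a) (hb : 1 ≤ b)
    (habc : a + b + c = n) :
    ((1 / ((a : ℝ) * (b : ℝ))) * (Nat.choose (2 * a - 2) (a - 1) : ℝ) *
        (Nat.choose (2 * b - 2) (b - 1) : ℝ) * (Nat.choose (2 * c) c : ℝ)) /
      ((((n : ℝ) - 1) / (n : ℝ)) * (Nat.choose (2 * n - 2) (n - 1) : ℝ)) ≤
    (1 / (2 * Real.pi)) * Real.sqrt (n : ℝ) /
      ((a : ℝ) * Real.sqrt ((a : ℝ) - 3/4) * (b : ℝ) * Real.sqrt ((b : ℝ) - 3/4) *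
        Real.sqrt ((c : ℝ) + 1/4)) := by
  rw [show 2 * a - 2 = 2 * (a - 1) from by omega, show 2 * b - 2 = 2 * (b - 1) from by omega,
    show 2 * n - 2 = 2 * (n - 1) from by omega, ← Nat.centralBinom_eq_two_mul_choose,
    ← Nat.centralBinom_eq_two_mul_choose, ← Nat.centralBinom_eq_two_mul_choose,
    ← Nat.centralBinom_eq_two_mul_choose]
  -- real cast facts
  have haR : (1:ℝ) ≤ (a:ℝ) := by exact_mod_cast ha
  have hbR : (1:ℝ) ≤ (b:ℝ) := by exact_mod_cast hb
  have hnR : (2:ℝ) ≤ (n:ℝ) := by exact_mod_cast hn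
  have hcR : (0:ℝ) ≤ (c:ℝ) := Nat.cast_nonneg c
  have cA : ((a - 1 : ℕ) : ℝ) = (a:ℝ) - 1 := by
    push_cast [Nat.cast_sub ha]; ring
  have cB : ((b - 1 : ℕ) : ℝ) = (b:ℝ) - 1 := by
    push_cast [Nat.cast_sub hb]; ring
  have cN : ((n - 1 : ℕ) : ℝ) = (n:ℝ) - 1 := by
    push_cast [Nat.cast_sub (by omega : 1 ≤ n)]; ring
  have hπ : (0:ℝ) < π := pi_pos
  set sπ : ℝ := Real.sqrt π with hsπdef
  have hsπpos : 0 < sπ := Real.sqrt_pos.mpr hπ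
  have hsπ : sπ ^ 2 = π := Real.sq_sqrt hπ.le
  set sA : ℝ := Real.sqrt ((a:ℝ) - 3/4) with hsA
  set sB : ℝ := Real.sqrt ((b:ℝ) - 3/4) with hsB
  set sC : ℝ := Real.sqrt ((c:ℝ) + 1/4) with hsC
  set sN : ℝ := Real.sqrt (n:ℝ) with hsN
  set sM : ℝ := Real.sqrt ((n:ℝ) - 2/3) with hsM
  have hsApos : 0 < sA := Real.sqrt_pos.mpr (by linarith)
  have hsBpos : 0 < sB := Real.sqrt_pos.mpr (by linarith)
  have hsCpos : 0 < sC := Real.sqrt_pos.mpr (by linarith)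
  have hsNpos : 0 < sN := Real.sqrt_pos.mpr (by linarith)
  have hsMpos : 0 < sM := Real.sqrt_pos.mpr (by linarith)
  -- the central binomial bounds
  have hUa : (Nat.centralBinom (a-1) : ℝ) * (sπ * sA) ≤ 4 ^ (a-1) := by
    have h := cb_upper (a-1)
    rwa [Real.sqrt_mul hπ.le, cA, show (a:ℝ) - 1 + 1/4 = (a:ℝ) - 3/4 from by ring] at h
  have hUb : (Nat.centralBinom (b-1) : ℝ) * (sπ * sB) ≤ 4 ^ (b-1) := by
    have h := cb_upper (b-1)
    rwa [Real.sqrt_mul hπ.le, cB, show (b:ℝ) - 1 + 1/4 = (b:ℝ) - 3/4 from by ring] at h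
  have hUc : (Nat.centralBinom c : ℝ) * (sπ * sC) ≤ 4 ^ c := by
    have h := cb_upper c
    rwa [Real.sqrt_mul hπ.le] at h
  have hL : (4:ℝ) ^ (n-1) ≤ (Nat.centralBinom (n-1) : ℝ) * (sπ * sM) := by
    have h := cb_lower (n-1)
    rwa [Real.sqrt_mul hπ.le, cN, show (n:ℝ) - 1 + 1/3 = (n:ℝ) - 2/3 from by ring] at h
  -- key scalar inequality
  have hkey : sM * (n:ℝ) ≤ 2 * ((n:ℝ) - 1) * sN := by
    have h1 : (sM * (n:ℝ)) ^ 2 ≤ (2 * ((n:ℝ) - 1) * sN) ^ 2 := by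
      have e1 : sM ^ 2 = (n:ℝ) - 2/3 := Real.sq_sqrt (by linarith)
      have e2 : sN ^ 2 = (n:ℝ) := Real.sq_sqrt (by linarith)
      rw [mul_pow, mul_pow, mul_pow, e1, e2]
      nlinarith [hnR, mul_nonneg (by linarith : (0:ℝ) ≤ (n:ℝ)) (sq_nonneg ((n:ℝ)-2))]
    have h2 : 0 ≤ sM * (n:ℝ) := by positivity
    have h3 : 0 ≤ 2 * ((n:ℝ) - 1) * sN := by nlinarith [hsNpos.le]
    nlinarith [h1, h2, h3]
  -- positivity of central binomials
  have hCa : (0:ℝ) < (Nat.centralBinom (a-1) : ℝ) := by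
    exact_mod_cast Nat.centralBinom_pos (a-1)
  have hCb : (0:ℝ) < (Nat.centralBinom (b-1) : ℝ) := by
    exact_mod_cast Nat.centralBinom_pos (b-1)
  have hCc : (0:ℝ) < (Nat.centralBinom c : ℝ) := by
    exact_mod_cast Nat.centralBinom_pos c
  have hCn : (0:ℝ) < (Nat.centralBinom (n-1) : ℝ) := by
    exact_mod_cast Nat.centralBinom_pos (n-1)
  have ha0 : (0:ℝ) < (a:ℝ) := by linarith
  have hb0 : (0:ℝ) < (b:ℝ) := by linarith
  have hn0 : (0:ℝ) < (n:ℝ) := by linarith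
  -- pow facts
  have hpow : (4:ℝ)^(a-1) * 4^(b-1) * 4^c = 4^(n-2) := by
    rw [← pow_add, ← pow_add]; congr 1; omega
  have hpow2 : (4:ℝ)^(n-1) = 4 * 4^(n-2) := by
    rw [show n - 1 = (n-2) + 1 from by omega]; ring
  have h4n2 : (0:ℝ) < 4 ^ (n-2) := by positivity
  -- set abbreviations for the products
  set x1 : ℝ := (Nat.centralBinom (a-1) : ℝ) * (sπ * sA) with hx1
  set x2 : ℝ := (Nat.centralBinom (b-1) : ℝ) * (sπ * sB) with hx2
  set x3 : ℝ := (Nat.centralBinom c : ℝ) * (sπ * sC) with hx3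
  have hx1p : 0 < x1 := by positivity
  have hx2p : 0 < x2 := by positivity
  have hx3p : 0 < x3 := by positivity
  -- the chained inequality
  have T' : x1 * x2 * x3 * (2 * (n:ℝ) * sM) ≤
      sN * ((n:ℝ) - 1) * ((Nat.centralBinom (n-1) : ℝ) * (sπ * sM)) := by
    calc x1 * x2 * x3 * (2 * (n:ℝ) * sM)
        ≤ (4:ℝ)^(a-1) * 4^(b-1) * 4^c * (2 * (n:ℝ) * sM) := by
          have : x1 * x2 * x3 ≤ (4:ℝ)^(a-1) * 4^(b-1) * 4^c := by
            have h12 : x1 * x2 ≤ (4:ℝ)^(a-1) * 4^(b-1) :=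
              mul_le_mul hUa hUb hx2p.le (by positivity)
            exact mul_le_mul h12 hUc hx3p.le (by positivity)
          exact mul_le_mul_of_nonneg_right this (by positivity)
      _ = 4^(n-2) * 2 * (sM * (n:ℝ)) := by rw [hpow]; ring
      _ ≤ 4^(n-2) * 2 * (2 * ((n:ℝ) - 1) * sN) := by
          exact mul_le_mul_of_nonneg_left hkey (by positivity)
      _ = (4:ℝ)^(n-1) * (((n:ℝ) - 1) * sN) := by rw [hpow2]; ring
      _ ≤ ((Nat.centralBinom (n-1) : ℝ) * (sπ * sM)) * (((n:ℝ) - 1) * sN) := by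
          apply mul_le_mul_of_nonneg_right hL
          have : (0:ℝ) ≤ (n:ℝ) - 1 := by linarith
          positivity
      _ = sN * ((n:ℝ) - 1) * ((Nat.centralBinom (n-1) : ℝ) * (sπ * sM)) := by ring
  -- now reduce the goal
  have hD : (0:ℝ) < (((n:ℝ) - 1) / (n:ℝ)) * (Nat.centralBinom (n-1) : ℝ) := by
    have : (0:ℝ) < (n:ℝ) - 1 := by linarith
    positivity
  have hK : (0:ℝ) < (a:ℝ) * sA * (b:ℝ) * sB * sC := by positivity
  rw [div_le_div_iff₀ hD hK]
  -- goal is now a product inequality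
  rw [show (1 / ((a:ℝ) * (b:ℝ)) * (Nat.centralBinom (a-1) : ℝ) * (Nat.centralBinom (b-1) : ℝ) *
      (Nat.centralBinom c : ℝ)) * ((a:ℝ) * sA * (b:ℝ) * sB * sC)
      = (Nat.centralBinom (a-1) : ℝ) * (Nat.centralBinom (b-1) : ℝ) * (Nat.centralBinom c : ℝ) *
        (sA * sB * sC) from by field_simp]
  rw [show (1 / (2 * π) * sN) * ((((n:ℝ) - 1) / (n:ℝ)) * (Nat.centralBinom (n-1) : ℝ))
      = sN * ((n:ℝ) - 1) * (Nat.centralBinom (n-1) : ℝ) / (2 * π * (n:ℝ)) from by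
        field_simp]
  rw [le_div_iff₀ (by positivity : (0:ℝ) < 2 * π * (n:ℝ))]
  apply le_of_mul_le_mul_right _ (show (0:ℝ) < sπ * sM by positivity)
  calc (Nat.centralBinom (a-1) : ℝ) * (Nat.centralBinom (b-1) : ℝ) * (Nat.centralBinom c : ℝ) *
        (sA * sB * sC) * (2 * π * (n:ℝ)) * (sπ * sM)
      = x1 * x2 * x3 * (2 * (n:ℝ) * sM) := by
        rw [hx1, hx2, hx3]
        linear_combination (-((Nat.centralBinom (a-1) : ℝ) * (Nat.centralBinom (b-1) : ℝ) *
          (Nat.centralBinom c : ℝ) * sA * sB * sC * 2 * (n:ℝ) * sM * sπ)) * hsπ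
    _ ≤ sN * ((n:ℝ) - 1) * ((Nat.centralBinom (n-1) : ℝ) * (sπ * sM)) := T'
    _ = sN * ((n:ℝ) - 1) * (Nat.centralBinom (n-1) : ℝ) * (sπ * sM) := by ring
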